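/- Let 1 ≤ n ≤ 5 and let M be a loopless matroid on ground set [n] that is irreducible under matroid union. Then M is the uniform matroid U_{1,[n]} of rank 1 on [n], i.e., the independent sets of M are exactly the empty set and the singletons of [n]. -/

import Mathlib

open Finset

variable {α : Type*} [DecidableEq α]

/-- A (finite) matroid with ground set `E`, given by its independent sets. -/
structure FinMatroid (α : Type*) [DecidableEq α] where
  E : Finset α
  Indep : Finset α → Prop
  indep_empty : Indep ∅
  indep_subset : ∀ ⦃I J : Finset α⦄, Indep J → I ⊆ J → Indep I
  indep_aug : ∀ ⦃I J : Finset α⦄, Indep I → Indep J → I.card < J.card →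
    ∃ e ∈ J, e ∉ I ∧ Indep (insert e I)
  subset_ground : ∀ ⦃I : Finset α⦄, Indep I → I ⊆ E

/-- The weighted matroid rank valuation:
`ρ^w(T) = max { ∑_{i ∈ I} w i : I independent, I ⊆ T }`. -/
noncomputable def weightedRank (M : FinMatroid α) (w : α → ℝ) (T : Finset α) : ℝ :=
  sSup {x : ℝ | ∃ I : Finset α, M.Indep I ∧ I ⊆ T ∧ x = ∑ i ∈ I, w i}

/-- `M` is the matroid union of `M1` and `M2`. -/
def IsMatroidUnion (M M1 M2 : FinMatroid α) : Prop :=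
  M.E = M1.E ∪ M2.E ∧
    ∀ I : Finset α, M.Indep I ↔
      ∃ I1 I2 : Finset α, M1.Indep I1 ∧ M2.Indep I2 ∧ I = I1 ∪ I2

/-- A matroid is irreducible under matroid union if whenever it is a union of
two matroids, one of them equals the matroid itself. -/
def MatroidIrreducible (M : FinMatroid α) : Prop :=
  ∀ M1 M2 : FinMatroid α, IsMatroidUnion M M1 M2 → M1 = M ∨ M2 = M


-- ===================== auxiliary matroid library =====================

namespace FinMatroid

open scoped Classical in
noncomputable def rk (M : FinMatroid α) (X : Finset α) : ℕ :=
  (X.powerset.filter fun I => M.Indep I).sup Finset.card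

variable (M : FinMatroid α)

open scoped Classical

lemma exists_basis (X : Finset α) : ∃ B, M.Indep B ∧ B ⊆ X ∧ B.card = M.rk X := by
  classical
  have hne : (X.powerset.filter fun I => M.Indep I).Nonempty :=
    ⟨∅, by simp [M.indep_empty]⟩
  obtain ⟨B, hB, hBc⟩ := Finset.exists_mem_eq_sup _ hne Finset.card
  simp only [Finset.mem_filter, Finset.mem_powerset] at hB
  exact ⟨B, hB.2, hB.1, by rw [rk]; convert hBc.symm⟩

lemma card_le_rk {I X : Finset α} (hI : M.Indep I) (hIX : I ⊆ X) : I.card ≤ M.rk X := by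
  classical
  refine Finset.le_sup ?_
  simp only [Finset.mem_filter, Finset.mem_powerset]
  exact ⟨hIX, hI⟩

lemma rk_mono {X Y : Finset α} (h : X ⊆ Y) : M.rk X ≤ M.rk Y := by
  obtain ⟨B, hBi, hBX, hBc⟩ := M.exists_basis X
  rw [← hBc]; exact M.card_le_rk hBi (hBX.trans h)

lemma rk_le_card (X : Finset α) : M.rk X ≤ X.card := by
  obtain ⟨B, hBi, hBX, hBc⟩ := M.exists_basis X
  rw [← hBc]; exact Finset.card_le_card hBX

lemma rk_of_indep {I : Finset α} (h : M.Indep I) : M.rk I = I.card :=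
  le_antisymm (M.rk_le_card I) (M.card_le_rk h (subset_refl I))

lemma indep_of_rk_eq_card {X : Finset α} (h : M.rk X = X.card) : M.Indep X := by
  obtain ⟨B, hBi, hBX, hBc⟩ := M.exists_basis X
  have : B = X := Finset.eq_of_subset_of_card_le hBX (by omega)
  rwa [← this]

lemma rk_insert_le (x : α) (X : Finset α) : M.rk (insert x X) ≤ M.rk X + 1 := by
  obtain ⟨B, hBi, hBX, hBc⟩ := M.exists_basis (insert x X)
  have h1 : B.erase x ⊆ X := by
    intro y hy
    have := hBX (Finset.mem_of_mem_erase hy)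
    rcases Finset.mem_insert.1 this with h | h
    · exact absurd h (Finset.ne_of_mem_erase hy)
    · exact h
  have h2 : M.Indep (B.erase x) := M.indep_subset hBi (Finset.erase_subset _ _)
  have := M.card_le_rk h2 h1
  have := Finset.pred_card_le_card_erase (a := x) (s := B)
  omega

lemma exists_basis_superset {I X : Finset α} (hI : M.Indep I) (hIX : I ⊆ X) :
    ∃ B, I ⊆ B ∧ M.Indep B ∧ B ⊆ X ∧ B.card = M.rk X := by
  have H : ∀ k (I : Finset α), M.Indep I → I ⊆ X → M.rk X - I.card ≤ k →
      ∃ B, I ⊆ B ∧ M.Indep B ∧ B ⊆ X ∧ B.card = M.rk X := by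
    intro k
    induction k with
    | zero =>
      intro I hI hIX hk
      exact ⟨I, subset_refl I, hI, hIX, le_antisymm (M.card_le_rk hI hIX) (by omega)⟩
    | succ k ih =>
      intro I hI hIX hk
      by_cases h : I.card = M.rk X
      · exact ⟨I, subset_refl I, hI, hIX, h⟩
      · have hlt : I.card < M.rk X := lt_of_le_of_ne (M.card_le_rk hI hIX) h
        obtain ⟨J, hJi, hJX, hJc⟩ := M.exists_basis X
        obtain ⟨e, heJ, heI, hInd⟩ := M.indep_aug hI hJi (by omega)
        have hcard : (insert e I).card = I.card + 1 := Finset.card_insert_of_notMem heI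
        obtain ⟨B, hB1, hB2, hB3, hB4⟩ :=
          ih (insert e I) hInd (Finset.insert_subset (hJX heJ) hIX) (by omega)
        exact ⟨B, (Finset.subset_insert e I).trans hB1, hB2, hB3, hB4⟩
  exact H (M.rk X) I hI hIX (by omega)

lemma rk_submod (X Y : Finset α) : M.rk (X ∪ Y) + M.rk (X ∩ Y) ≤ M.rk X + M.rk Y := by
  obtain ⟨B0, hB0i, hB0s, hB0c⟩ := M.exists_basis (X ∩ Y)
  obtain ⟨B, hBs, hBi, hBX, hBc⟩ :=
    M.exists_basis_superset hB0i (hB0s.trans (Finset.inter_subset_union))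
  have h1 : (B ∩ X).card ≤ M.rk X := M.card_le_rk (M.indep_subset hBi inter_subset_left) inter_subset_right
  have h2 : (B ∩ Y).card ≤ M.rk Y := M.card_le_rk (M.indep_subset hBi inter_subset_left) inter_subset_right
  have h3 : (B ∩ X) ∪ (B ∩ Y) = B := by
    rw [← Finset.inter_union_distrib_left]
    exact Finset.inter_eq_left.2 hBX
  have h4 : (B ∩ X) ∩ (B ∩ Y) = B ∩ (X ∩ Y) := by
    ext z; simp only [Finset.mem_inter]; tauto
  have h5 := Finset.card_inter_add_card_union (B ∩ X) (B ∩ Y)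
  have h6 : M.rk (X ∩ Y) ≤ (B ∩ (X ∩ Y)).card := by
    rw [← hB0c]
    exact Finset.card_le_card (Finset.subset_inter hBs hB0s)
  rw [h3, h4] at h5
  omega

lemma rk_insert_eq_of_subset {A B : Finset α} (x : α) (hAB : A ⊆ B)
    (h : M.rk (insert x A) = M.rk A) : M.rk (insert x B) = M.rk B := by
  refine le_antisymm ?_ (M.rk_mono (Finset.subset_insert x B))
  have hsub := M.rk_submod B (insert x A)
  have h1 : B ∪ insert x A = insert x B := by
    rw [Finset.union_insert, Finset.union_eq_left.2 hAB]
  have h2 : A ⊆ B ∩ insert x A := Finset.subset_inter hAB (Finset.subset_insert x A)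
  have h3 := M.rk_mono h2
  rw [h1, h] at hsub
  omega

lemma rk_union_eq (B D : Finset α) (h : ∀ x ∈ D, M.rk (insert x B) = M.rk B) :
    M.rk (B ∪ D) = M.rk B := by
  classical
  induction D using Finset.induction_on with
  | empty => simp
  | @insert d D hd ih =>
    have hBD : M.rk (B ∪ D) = M.rk B := ih (fun x hx => h x (Finset.mem_insert_of_mem hx))
    have : M.rk (insert d (B ∪ D)) = M.rk (B ∪ D) := by
      refine M.rk_insert_eq_of_subset d Finset.subset_union_left ?_
      exact h d (Finset.mem_insert_self d D)
    rw [Finset.union_insert, this]; exact hBD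

def restrict (A : Finset α) : FinMatroid α where
  E := A
  Indep I := M.Indep I ∧ I ⊆ A
  indep_empty := ⟨M.indep_empty, Finset.empty_subset A⟩
  indep_subset := fun I J hJ hIJ => ⟨M.indep_subset hJ.1 hIJ, hIJ.trans hJ.2⟩
  indep_aug := fun I J hI hJ hc => by
    obtain ⟨e, heJ, heI, hind⟩ := M.indep_aug hI.1 hJ.1 hc
    exact ⟨e, heJ, heI, hind, Finset.insert_subset (hJ.2 heJ) hI.2⟩
  subset_ground := fun I hI => hI.2

def unifOn (E : Finset α) (k : ℕ) : FinMatroid α where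
  E := E
  Indep I := I ⊆ E ∧ I.card ≤ k
  indep_empty := ⟨Finset.empty_subset E, by simp⟩
  indep_subset := fun I J hJ hIJ =>
    ⟨hIJ.trans hJ.1, le_trans (Finset.card_le_card hIJ) hJ.2⟩
  indep_aug := fun I J hI hJ hc => by
    have : ∃ e ∈ J, e ∉ I := by
      by_contra hcon; push_neg at hcon
      exact absurd (Finset.card_le_card hcon) (by omega)
    obtain ⟨e, heJ, heI⟩ := this
    refine ⟨e, heJ, heI, Finset.insert_subset (hJ.1 heJ) hI.1, ?_⟩
    rw [Finset.card_insert_of_notMem heI]; omega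
  subset_ground := fun I hI => hI.1

lemma exists_split (I : Finset α) (a b : ℕ) (h : I.card ≤ a + b) :
    ∃ I1 I2 : Finset α, I1 ∪ I2 = I ∧ I1.card ≤ a ∧ I2.card ≤ b := by
  obtain ⟨I1, hsub, hcard⟩ := Finset.exists_subset_card_eq (min_le_right a I.card)
  refine ⟨I1, I \ I1, Finset.union_sdiff_of_subset hsub, by omega, ?_⟩
  rw [Finset.card_sdiff_of_subset hsub]; omega

end FinMatroid


-- ===================== main theorem =====================

set_option maxHeartbeats 4000000 in
/-- For `1 ≤ n ≤ 5`, the only loopless matroid on `[n]` irreducible under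
matroid union is the uniform matroid `U_{1,[n]}` of rank 1. -/
theorem irreducible_loopless_le_five_is_uniform (n : ℕ) (h1 : 1 ≤ n)
    (h5 : n ≤ 5) (M : FinMatroid (Fin n)) (hE : M.E = Finset.univ)
    (hloopless : ∀ i : Fin n, M.Indep {i}) (hirr : MatroidIrreducible M) :
    ∀ I : Finset (Fin n), M.Indep I ↔ I = ∅ ∨ ∃ i : Fin n, I = {i} := by
  classical
  have key : ∀ a b : Fin n, a ≠ b → ¬ M.Indep {a, b} := by
    intro a b hab hpair
    -- ======== prelude ========
    have finish : ∀ M1 M2 : FinMatroid (Fin n), IsMatroidUnion M M1 M2 → M1 ≠ M → M2 ≠ M →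
        False := by
      intro M1 M2 hu hne1 hne2
      rcases hirr M1 M2 hu with h | h
      exacts [hne1 h, hne2 h]
    have neqE : ∀ M1 : FinMatroid (Fin n), M1.E ≠ univ → M1 ≠ M := by
      intro M1 h h'; exact h (by rw [h', hE])
    have neqI : ∀ (M1 : FinMatroid (Fin n)) (W : Finset (Fin n)),
        M.Indep W → ¬ M1.Indep W → M1 ≠ M := by
      intro M1 W hW hW' h'; exact hW' (by rw [h']; exact hW)
    have hcardu : (univ : Finset (Fin n)).card = n := by simp
    have hn2 : 2 ≤ n := by
      have h2 : ({a, b} : Finset (Fin n)).card = 2 := card_pair hab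
      have := Finset.card_le_card (subset_univ ({a, b} : Finset (Fin n)))
      omega
    have hrk1 : ∀ x : Fin n, M.rk {x} = 1 := by
      intro x; rw [M.rk_of_indep (hloopless x), card_singleton]
    have hr2ge : 2 ≤ M.rk univ := by
      have := M.card_le_rk hpair (subset_univ _)
      rwa [card_pair hab] at this
    have hrn : M.rk univ ≤ n := le_trans (M.rk_le_card _) (le_of_eq hcardu)
    have hdep_rk : ∀ x y : Fin n, x ≠ y → ¬ M.Indep {x, y} → M.rk {x, y} ≤ 1 := by
      intro x y hxy hdep
      have hcc : ({x, y} : Finset (Fin n)).card = 2 := card_pair hxy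
      have h1 := M.rk_le_card {x, y}
      have h2 : M.rk {x, y} ≠ 2 := fun hh => hdep (M.indep_of_rk_eq_card (by rw [hh, hcc]))
      omega
    have hsing_sub : ∀ x y : Fin n, ({x} : Finset (Fin n)) ⊆ {x, y} := by
      intro x y; exact Finset.singleton_subset_iff.2 (Finset.mem_insert_self x {y})
    have hrk_pair_ge : ∀ x y : Fin n, 1 ≤ M.rk {x, y} := by
      intro x y
      calc 1 = M.rk {x} := (hrk1 x).symm
        _ ≤ M.rk {x, y} := M.rk_mono (hsing_sub x y)
    have htrans : ∀ x y z : Fin n, M.rk {x, y} ≤ 1 → M.rk {x, z} ≤ 1 → M.rk {y, z} ≤ 1 := by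
      intro x y z h1 h2
      have hxy : M.rk {x, y} = 1 := le_antisymm h1 (hrk_pair_ge x y)
      have hstep : M.rk (insert y {x}) = M.rk {x} := by
        rw [show (insert y ({x} : Finset (Fin n))) = ({y, x} : Finset (Fin n)) from rfl,
          Finset.pair_comm y x, hxy, hrk1]
      have hins : M.rk (insert y {x, z}) = M.rk {x, z} :=
        M.rk_insert_eq_of_subset y (hsing_sub x z) hstep
      have hsub : ({y, z} : Finset (Fin n)) ⊆ insert y {x, z} := by
        intro w hw; simp only [mem_insert, mem_singleton] at hw ⊢; tauto
      calc M.rk {y, z} ≤ M.rk (insert y {x, z}) := M.rk_mono hsub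
        _ = M.rk {x, z} := hins
        _ ≤ 1 := h2
    have hrk_pair_comm : ∀ x y : Fin n, M.rk {x, y} = M.rk {y, x} := by
      intro x y; rw [Finset.pair_comm]
    -- ======== separator case ========
    by_cases hsepE : ∃ A : Finset (Fin n), A ≠ ∅ ∧ A ≠ univ ∧
        M.rk A + M.rk (univ \ A) = M.rk univ
    · obtain ⟨A, hA0, hAu, hA⟩ := hsepE
      refine finish (M.restrict A) (M.restrict (univ \ A)) ⟨?_, ?_⟩ ?_ ?_
      · show M.E = A ∪ (univ \ A)
        rw [hE, Finset.union_sdiff_of_subset (subset_univ A)]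
      · intro I
        constructor
        · intro hI
          refine ⟨I ∩ A, I \ A, ⟨M.indep_subset hI Finset.inter_subset_left,
            Finset.inter_subset_right⟩,
            ⟨M.indep_subset hI Finset.sdiff_subset, ?_⟩, ?_⟩
          · intro z hz
            simp only [Finset.mem_sdiff] at hz ⊢
            exact ⟨mem_univ z, hz.2⟩
          · ext z
            simp only [Finset.mem_union, Finset.mem_inter, Finset.mem_sdiff]
            tauto
        · rintro ⟨I1, I2, ⟨h1i, h1s⟩, ⟨h2i, h2s⟩, rfl⟩
          have h2s' : I2 ⊆ univ \ A := h2s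
          obtain ⟨B1, hB1s, hB1i, hB1A, hB1c⟩ := M.exists_basis_superset h1i h1s
          obtain ⟨B2, hB2s, hB2i, hB2A, hB2c⟩ := M.exists_basis_superset h2i h2s'
          have hspan1 : ∀ x ∈ A, M.rk (insert x B1) = M.rk B1 := by
            intro x hx
            have hle : M.rk (insert x B1) ≤ M.rk A :=
              M.rk_mono (Finset.insert_subset hx hB1A)
            have hge : M.rk B1 ≤ M.rk (insert x B1) := M.rk_mono (Finset.subset_insert _ _)
            have heq : M.rk B1 = M.rk A := by rw [M.rk_of_indep hB1i, hB1c]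
            omega
          have hspan2 : ∀ x ∈ univ \ A, M.rk (insert x B2) = M.rk B2 := by
            intro x hx
            have hle : M.rk (insert x B2) ≤ M.rk (univ \ A) :=
              M.rk_mono (Finset.insert_subset hx hB2A)
            have hge : M.rk B2 ≤ M.rk (insert x B2) := M.rk_mono (Finset.subset_insert _ _)
            have heq : M.rk B2 = M.rk (univ \ A) := by rw [M.rk_of_indep hB2i, hB2c]
            omega
          have hr1 : M.rk (B1 ∪ B2 ∪ A) = M.rk (B1 ∪ B2) := by
            apply M.rk_union_eq
            intro x hx
            exact M.rk_insert_eq_of_subset x Finset.subset_union_left (hspan1 x hx)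
          have hr2' : M.rk ((B1 ∪ B2 ∪ A) ∪ (univ \ A)) = M.rk (B1 ∪ B2 ∪ A) := by
            apply M.rk_union_eq
            intro x hx
            refine M.rk_insert_eq_of_subset x ?_ (hspan2 x hx)
            exact Finset.Subset.trans Finset.subset_union_right Finset.subset_union_left
          have huniv : (B1 ∪ B2 ∪ A) ∪ (univ \ A) = univ := by
            ext z
            simp only [Finset.mem_union, Finset.mem_sdiff, mem_univ, true_and, iff_true]
            by_cases hz : z ∈ A
            · left; right; exact hz
            · right; exact hz
          have hrk12 : M.rk (B1 ∪ B2) = M.rk univ := by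
            rw [← hr1, ← hr2', huniv]
          have hdisj : Disjoint B1 B2 := by
            refine Finset.disjoint_left.2 ?_
            intro z hz1 hz2
            exact (Finset.mem_sdiff.1 (hB2A hz2)).2 (hB1A hz1)
          have hcard12 : (B1 ∪ B2).card = M.rk univ := by
            rw [Finset.card_union_of_disjoint hdisj, hB1c, hB2c, hA]
          have hind : M.Indep (B1 ∪ B2) :=
            M.indep_of_rk_eq_card (by rw [hrk12, hcard12])
          exact M.indep_subset hind (Finset.union_subset_union hB1s hB2s)
      · exact neqE _ hAu
      · refine neqE _ ?_
        obtain ⟨x, hx⟩ := Finset.nonempty_iff_ne_empty.2 hA0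
        intro h
        have h2 : (univ \ A : Finset (Fin n)) = univ := h
        have hxm : x ∈ univ \ A := by rw [h2]; exact mem_univ x
        exact (Finset.mem_sdiff.1 hxm).2 hx
    push_neg at hsepE
    have hnosep : ∀ A : Finset (Fin n), A ≠ ∅ → A ≠ univ →
        M.rk A + M.rk (univ \ A) ≠ M.rk univ :=
      fun A hA hAu => hsepE A (Finset.nonempty_iff_ne_empty.2 hA) hAu
    have hne_univ_single : ∀ e : Fin n, ({e} : Finset (Fin n)) ≠ univ := by
      intro e h
      have ha : a ∈ ({e} : Finset (Fin n)) := by rw [h]; exact mem_univ a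
      have hb : b ∈ ({e} : Finset (Fin n)) := by rw [h]; exact mem_univ b
      simp only [mem_singleton] at ha hb
      exact hab (ha.trans hb.symm)
    have herase : ∀ e : Fin n, M.rk (univ \ {e}) = M.rk univ := by
      intro e
      have hins : insert e (univ \ {e}) = univ := by
        ext z; by_cases hz : z = e <;> simp [hz]
      have h1 := M.rk_insert_le e (univ \ {e})
      rw [hins] at h1
      have h2 : M.rk (univ \ {e}) ≤ M.rk univ := M.rk_mono (Finset.sdiff_subset)
      have h3 := hnosep {e} (Finset.singleton_ne_empty e) (hne_univ_single e)
      rw [hrk1 e] at h3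
      omega
    -- ======== full rank case is impossible ========
    have hrnn : M.rk univ ≠ n := by
      intro hru
      have huniv : M.Indep univ := M.indep_of_rk_eq_card (by rw [hru, hcardu])
      have hcompl : M.rk (univ \ {a}) = n - 1 := by
        have hind : M.Indep (univ \ {a}) := M.indep_subset huniv Finset.sdiff_subset
        rw [M.rk_of_indep hind, Finset.card_sdiff_of_subset (Finset.singleton_subset_iff.2 (mem_univ a)),
          hcardu, card_singleton]
      have := hnosep {a} (Finset.singleton_ne_empty a) (hne_univ_single a)
      rw [hrk1 a, hcompl, hru] at this
      omega
    -- ======== uniform split machinery ========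
    have unifsplit : ∀ k1 k2 : ℕ, 1 ≤ k1 → k1 + k2 = M.rk univ → 2 ≤ k2 → k2 < M.rk univ →
        (∀ I : Finset (Fin n), M.Indep I ↔ I.card ≤ M.rk univ) → False := by
      intro k1 k2 hk1 hsum hk2 hk2lt hchar
      obtain ⟨B, hBi, _, hBc⟩ := M.exists_basis univ
      refine finish (FinMatroid.unifOn univ k1) (FinMatroid.unifOn univ k2)
        ⟨by rw [hE]; show (univ : Finset (Fin n)) = univ ∪ univ; simp, ?_⟩ ?_ ?_
      · intro I
        rw [hchar I]
        constructor
        · intro hc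
          obtain ⟨I1, I2, hu, hc1, hc2⟩ := FinMatroid.exists_split I k1 k2 (by omega)
          exact ⟨I1, I2, ⟨subset_univ _, hc1⟩, ⟨subset_univ _, hc2⟩, hu.symm⟩
        · rintro ⟨I1, I2, ⟨_, hc1⟩, ⟨_, hc2⟩, rfl⟩
          have := Finset.card_union_le I1 I2
          omega
      · refine neqI _ B hBi ?_
        intro hB
        have hB2 : B ⊆ univ ∧ B.card ≤ k1 := hB
        omega
      · refine neqI _ B hBi ?_
        intro hB
        have hB2 : B ⊆ univ ∧ B.card ≤ k2 := hB
        omega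
    -- ======== rank 2 case ========
    by_cases hr2 : M.rk univ = 2
    · -- generic rank-2 finisher
      have rank2finish : ∀ P1 P2 : Finset (Fin n),
          (∀ x y : Fin n, x ≠ y → M.rk {x, y} ≤ 1 → (x ∈ P1 ∧ y ∈ P1) ∨ (x ∈ P2 ∧ y ∈ P2)) →
          (∀ x : Fin n, ¬(x ∈ P1 ∧ x ∈ P2)) →
          (∀ x y : Fin n, x ∈ P1 → y ∈ P1 → M.rk {x, y} ≤ 1) →
          (∀ x y : Fin n, x ∈ P2 → y ∈ P2 → M.rk {x, y} ≤ 1) → False := by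
        intro P1 P2 hcover hdisj hpar1 hpar2
        have hgood : ∀ x y : Fin n, x ∈ univ \ P2 → y ∈ univ \ P1 → M.Indep (insert x {y}) := by
          intro x y hx hy
          simp only [Finset.mem_sdiff, mem_univ, true_and] at hx hy
          by_cases hxy : x = y
          · subst hxy
            have : (insert x ({x} : Finset (Fin n))) = {x} := by simp
            rw [this]; exact hloopless x
          · by_contra hdep
            have hle := hdep_rk x y hxy hdep
            rcases hcover x y hxy hle with ⟨_, h⟩ | ⟨h, _⟩
            · exact hy h
            · exact hx h
        refine finish (FinMatroid.unifOn (univ \ P2) 1) (FinMatroid.unifOn (univ \ P1) 1)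
          ⟨?_, ?_⟩ ?_ ?_
        · rw [hE]
          show (univ : Finset (Fin n)) = (univ \ P2) ∪ (univ \ P1)
          ext z
          simp only [Finset.mem_union, Finset.mem_sdiff, mem_univ, true_and, true_iff]
          by_cases h2 : z ∈ P2
          · right; intro h1; exact hdisj z ⟨h1, h2⟩
          · left; exact h2
        · intro I
          constructor
          · intro hI
            have hc : I.card ≤ 2 := by
              have := M.card_le_rk hI (subset_univ _); omega
            rcases Nat.lt_or_ge I.card 2 with hc1 | hc2
            · rcases Nat.lt_or_ge I.card 1 with hc0 | hc1'
              · have : I = ∅ := Finset.card_eq_zero.1 (by omega)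
                exact ⟨∅, ∅, ⟨by simp, by simp⟩, ⟨by simp, by simp⟩, by simp [this]⟩
              · obtain ⟨x, rfl⟩ := Finset.card_eq_one.1 (le_antisymm (by omega) hc1')
                by_cases hx2 : x ∈ P2
                · refine ⟨∅, {x}, ⟨by simp, by simp⟩, ⟨?_, by simp⟩, by simp⟩
                  simp only [Finset.singleton_subset_iff, Finset.mem_sdiff, mem_univ, true_and]
                  intro h1; exact hdisj x ⟨h1, hx2⟩
                · refine ⟨{x}, ∅, ⟨?_, by simp⟩, ⟨by simp, by simp⟩, by simp⟩
                  simp only [Finset.singleton_subset_iff, Finset.mem_sdiff, mem_univ, true_and]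
                  exact hx2
            · obtain ⟨x, y, hxy, rfl⟩ := Finset.card_eq_two.1 (le_antisymm hc hc2)
              have hrk2 : ¬ M.rk {x, y} ≤ 1 := by
                rw [M.rk_of_indep hI, card_pair hxy]; omega
              have hsplit : (x ∉ P2 ∧ y ∉ P1) ∨ (x ∉ P1 ∧ y ∉ P2) := by
                by_contra hcon
                push_neg at hcon
                obtain ⟨hA, hB⟩ := hcon
                by_cases hx2 : x ∈ P2
                · by_cases hx1 : x ∈ P1
                  · exact hdisj x ⟨hx1, hx2⟩
                  · exact hrk2 (hpar2 x y hx2 (hB hx1))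
                · have hy1 := hA hx2
                  by_cases hx1 : x ∈ P1
                  · exact hrk2 (hpar1 x y hx1 hy1)
                  · exact hdisj y ⟨hy1, hB hx1⟩
              rcases hsplit with ⟨hx2, hy1⟩ | ⟨hx1, hy2⟩
              · exact ⟨{x}, {y}, ⟨by simp [hx2], by simp⟩, ⟨by simp [hy1], by simp⟩, rfl⟩
              · refine ⟨{y}, {x}, ⟨by simp [hy2], by simp⟩, ⟨by simp [hx1], by simp⟩, ?_⟩
                rw [Finset.pair_comm]; rfl
          · rintro ⟨I1, I2, ⟨h1s, h1c⟩, ⟨h2s, h2c⟩, rfl⟩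
            haveI : Nonempty (Fin n) := ⟨a⟩
            rcases Finset.card_le_one_iff_subset_singleton.1 h1c with ⟨x, hx⟩
            rcases Finset.card_le_one_iff_subset_singleton.1 h2c with ⟨y, hy⟩
            rcases Finset.subset_singleton_iff.1 hx with rfl | rfl
            · rcases Finset.subset_singleton_iff.1 hy with rfl | rfl
              · simpa using M.indep_empty
              · rw [Finset.empty_union]; exact hloopless y
            · rcases Finset.subset_singleton_iff.1 hy with rfl | rfl
              · rw [Finset.union_empty]; exact hloopless x
              · have := hgood x y (h1s (mem_singleton_self x)) (h2s (mem_singleton_self y))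
                have heq : ({x} : Finset (Fin n)) ∪ {y} = insert x {y} := rfl
                rw [heq]; exact this
        · refine neqI _ {a, b} hpair ?_
          intro hW
          have hW2 : ({a, b} : Finset (Fin n)) ⊆ univ \ P2 ∧ ({a, b} : Finset (Fin n)).card ≤ 1 := hW
          rw [card_pair hab] at hW2
          omega
        · refine neqI _ {a, b} hpair ?_
          intro hW
          have hW2 : ({a, b} : Finset (Fin n)) ⊆ univ \ P1 ∧ ({a, b} : Finset (Fin n)).card ≤ 1 := hW
          rw [card_pair hab] at hW2
          omega
      -- now choose the two parallel classes
      by_cases hex1 : ∃ x y : Fin n, x ≠ y ∧ M.rk {x, y} ≤ 1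
      · obtain ⟨x0, y0, hxy0, hdep0⟩ := hex1
        set P1 : Finset (Fin n) := univ.filter (fun z => M.rk {x0, z} ≤ 1) with hP1
        have hmemP1 : ∀ z : Fin n, z ∈ P1 ↔ M.rk {x0, z} ≤ 1 := by
          intro z; simp [hP1]
        have hx0P1 : x0 ∈ P1 := by
          rw [hmemP1]
          have : ({x0, x0} : Finset (Fin n)) = {x0} := by simp
          rw [this, hrk1]
        have hy0P1 : y0 ∈ P1 := (hmemP1 y0).2 hdep0
        have hP1trans : ∀ u v : Fin n, u ∈ P1 → M.rk {u, v} ≤ 1 → v ∈ P1 := by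
          intro u v hu huv
          rw [hmemP1] at hu ⊢
          exact htrans u x0 v (by rw [← hrk_pair_comm]; exact hu) huv
        have hpar1 : ∀ u v : Fin n, u ∈ P1 → v ∈ P1 → M.rk {u, v} ≤ 1 := by
          intro u v hu hv
          rw [hmemP1] at hu hv
          exact htrans x0 u v hu hv
        by_cases hex2 : ∃ u v : Fin n, u ≠ v ∧ M.rk {u, v} ≤ 1 ∧ u ∉ P1
        · obtain ⟨u0, v0, huv0, hdepu0, hu0P1⟩ := hex2
          set P2 : Finset (Fin n) := univ.filter (fun z => M.rk {u0, z} ≤ 1) with hP2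
          have hmemP2 : ∀ z : Fin n, z ∈ P2 ↔ M.rk {u0, z} ≤ 1 := by
            intro z; simp [hP2]
          have hu0P2 : u0 ∈ P2 := by
            rw [hmemP2]
            have : ({u0, u0} : Finset (Fin n)) = {u0} := by simp
            rw [this, hrk1]
          have hv0P2 : v0 ∈ P2 := (hmemP2 v0).2 hdepu0
          have hP2trans : ∀ u v : Fin n, u ∈ P2 → M.rk {u, v} ≤ 1 → v ∈ P2 := by
            intro u v hu huv
            rw [hmemP2] at hu ⊢
            exact htrans u u0 v (by rw [← hrk_pair_comm]; exact hu) huv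
          have hpar2 : ∀ u v : Fin n, u ∈ P2 → v ∈ P2 → M.rk {u, v} ≤ 1 := by
            intro u v hu hv
            rw [hmemP2] at hu hv
            exact htrans u0 u v hu hv
          have hdisj : ∀ x : Fin n, ¬(x ∈ P1 ∧ x ∈ P2) := by
            rintro x ⟨hx1, hx2⟩
            exact hu0P1 (hP1trans x u0 hx1 (by rw [hrk_pair_comm]; exact (hmemP2 x).1 hx2))
          refine rank2finish P1 P2 ?_ hdisj hpar1 hpar2
          intro x y hxy hdep
          by_cases hx1 : x ∈ P1
          · exact Or.inl ⟨hx1, hP1trans x y hx1 hdep⟩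
          · by_cases hx2 : x ∈ P2
            · exact Or.inr ⟨hx2, hP2trans x y hx2 hdep⟩
            · -- six distinct elements: contradiction
              exfalso
              have hy1 : y ∉ P1 := fun hy1 =>
                hx1 (hP1trans y x hy1 (by rw [hrk_pair_comm]; exact hdep))
              have hy2 : y ∉ P2 := fun hy2 =>
                hx2 (hP2trans y x hy2 (by rw [hrk_pair_comm]; exact hdep))
              have hv0P1 : v0 ∉ P1 := fun hv1 =>
                hu0P1 (hP1trans v0 u0 hv1 (by rw [hrk_pair_comm]; exact hdepu0))
              have hS : ({x0, y0, u0, v0, x, y} : Finset (Fin n)).card = 6 := by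
                have d1 : x0 ≠ y0 := hxy0
                have d2 : x0 ≠ u0 := fun h => hu0P1 (h ▸ hx0P1)
                have d3 : x0 ≠ v0 := fun h => hv0P1 (h ▸ hx0P1)
                have d4 : x0 ≠ x := fun h => hx1 (h ▸ hx0P1)
                have d5 : x0 ≠ y := fun h => hy1 (h ▸ hx0P1)
                have d6 : y0 ≠ u0 := fun h => hu0P1 (h ▸ hy0P1)
                have d7 : y0 ≠ v0 := fun h => hv0P1 (h ▸ hy0P1)
                have d8 : y0 ≠ x := fun h => hx1 (h ▸ hy0P1)
                have d9 : y0 ≠ y := fun h => hy1 (h ▸ hy0P1)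
                have d10 : u0 ≠ v0 := huv0
                have d11 : u0 ≠ x := fun h => hx2 (h ▸ hu0P2)
                have d12 : u0 ≠ y := fun h => hy2 (h ▸ hu0P2)
                have d13 : v0 ≠ x := fun h => hx2 (h ▸ hv0P2)
                have d14 : v0 ≠ y := fun h => hy2 (h ▸ hv0P2)
                have d15 : x ≠ y := hxy
                rw [Finset.card_insert_of_notMem (by simp [d1, d2, d3, d4, d5]),
                  Finset.card_insert_of_notMem (by simp [d6, d7, d8, d9]),
                  Finset.card_insert_of_notMem (by simp [d10, d11, d12]),
                  Finset.card_insert_of_notMem (by simp [d13, d14]),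
                  Finset.card_insert_of_notMem (by simp [d15]),
                  Finset.card_singleton]
              have hle := Finset.card_le_card
                (subset_univ ({x0, y0, u0, v0, x, y} : Finset (Fin n)))
              rw [hS, hcardu] at hle
              omega
        · push_neg at hex2
          refine rank2finish P1 ∅ ?_ (by simp) hpar1 (by simp)
          intro x y hxy hdep
          have hx1 : x ∈ P1 := hex2 x y hxy hdep
          exact Or.inl ⟨hx1, hP1trans x y hx1 hdep⟩
      · push_neg at hex1
        refine rank2finish ∅ ∅ ?_ (by simp) (by simp) (by simp)
        intro x y hxy hdep
        exact absurd hdep (by have := hex1 x y hxy; omega)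
    have hr3ge : 3 ≤ M.rk univ := by omega
    -- ======== rank n-1 case ========
    by_cases hrn1 : M.rk univ = n - 1
    · have hchar : ∀ I : Finset (Fin n), M.Indep I ↔ I.card ≤ M.rk univ := by
        intro I
        constructor
        · intro hI
          have := M.card_le_rk hI (subset_univ _); omega
        · intro hc
          have hex : ∃ e : Fin n, e ∉ I := by
            by_contra hcon; push_neg at hcon
            have : univ ⊆ I := fun z _ => hcon z
            have := Finset.card_le_card this
            omega
          obtain ⟨e, he⟩ := hex
          have hIsub : I ⊆ univ \ {e} := by
            intro z hz
            simp only [Finset.mem_sdiff, mem_univ, true_and, mem_singleton]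
            intro hze; exact he (hze ▸ hz)
          have hind : M.Indep (univ \ {e}) := by
            apply M.indep_of_rk_eq_card
            rw [herase e, Finset.card_sdiff_of_subset (Finset.singleton_subset_iff.2 (mem_univ e)),
              hcardu, card_singleton, hrn1]
          exact M.indep_subset hind hIsub
      exact unifsplit (M.rk univ - 2) 2 (by omega) (by omega) (by omega) (by omega) hchar
    -- ======== rank 3 on 5 elements ========
    have hn5 : n = 5 := by omega
    have hr3 : M.rk univ = 3 := by omega
    by_cases hline : ∃ T : Finset (Fin n), T.card = 3 ∧ M.rk T ≤ 2
    · obtain ⟨T0, hT0c, hT0r⟩ := hline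
      have hcard5 : (univ : Finset (Fin n)).card = 5 := by rw [hcardu, hn5]
      -- choose a maximal "line" F
      have hcand : T0 ∈ (univ : Finset (Fin n)).powerset.filter
          (fun X => M.rk X ≤ 2 ∧ 3 ≤ X.card) := by
        rw [Finset.mem_filter, Finset.mem_powerset]
        exact ⟨subset_univ T0, hT0r, by omega⟩
      obtain ⟨F, hFmem, hFmax⟩ := Finset.exists_max_image _ Finset.card ⟨T0, hcand⟩
      rw [Finset.mem_filter, Finset.mem_powerset] at hFmem
      obtain ⟨-, hFrk, hFc3⟩ := hFmem
      have hFne : F ≠ univ := by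
        intro h; rw [h, hr3] at hFrk; omega
      have hFins : ∀ x : Fin n, x ∉ F → M.rk (insert x F) = 3 := by
        intro x hx
        have hle : M.rk (insert x F) ≤ 3 := by
          have := M.rk_mono (subset_univ (insert x F)); omega
        by_contra hne3
        have h2 : M.rk (insert x F) ≤ 2 := by omega
        have hmem : insert x F ∈ (univ : Finset (Fin n)).powerset.filter
            (fun X => M.rk X ≤ 2 ∧ 3 ≤ X.card) := by
          rw [Finset.mem_filter, Finset.mem_powerset]
          refine ⟨subset_univ _, h2, ?_⟩
          rw [Finset.card_insert_of_notMem hx]; omega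
        have := hFmax _ hmem
        rw [Finset.card_insert_of_notMem hx] at this; omega
      have hF2 : M.rk F = 2 := by
        have hxex : ∃ x, x ∉ F := by
          by_contra h; push_neg at h
          exact hFne (Finset.eq_univ_iff_forall.2 h)
        obtain ⟨x, hx⟩ := hxex
        have ha1 := M.rk_insert_le x F
        have ha2 := hFins x hx
        omega
      have hFnonempty : F ≠ ∅ := by
        intro h; rw [h] at hFc3; simp at hFc3
      have hFcard : F.card = 3 := by
        have hle4 : F.card ≤ 4 := by
          have := Finset.card_lt_card (Finset.ssubset_univ_iff.2 hFne)
          omega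
        by_contra hne
        have h4 : F.card = 4 := by omega
        have hGc : (univ \ F).card = 1 := by
          rw [Finset.card_sdiff_of_subset (subset_univ F), hcard5, h4]
        obtain ⟨e, he⟩ := Finset.card_eq_one.1 hGc
        have hrke : M.rk (univ \ F) = 1 := by rw [he, hrk1]
        exact hnosep F hFnonempty hFne (by rw [hrke, hF2, hr3])
      set G := univ \ F with hGdef
      have hGcard : G.card = 2 := by
        rw [hGdef, Finset.card_sdiff_of_subset (subset_univ F), hcard5, hFcard]
      have hFG : univ \ G = F := by
        rw [hGdef, Finset.sdiff_sdiff_self_left, Finset.univ_inter]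
      have hGne : G ≠ ∅ := by
        intro h; rw [h] at hGcard; simp at hGcard
      have hsGnotF : ∀ s ∈ G, s ∉ F := by
        intro s hs; exact (Finset.mem_sdiff.1 (hGdef ▸ hs)).2
      have hFmem2 : ∀ x : Fin n, x ∉ G → x ∈ F := by
        intro x hx
        have : x ∈ univ \ G := Finset.mem_sdiff.2 ⟨mem_univ x, hx⟩
        rwa [hFG] at this
      have hGrk : M.rk G = 2 := by
        have ha1 : M.rk G ≤ 2 := by have := M.rk_le_card G; omega
        have ha2 : 1 ≤ M.rk G := by
          have hne : G.Nonempty := Finset.nonempty_iff_ne_empty.2 hGne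
          obtain ⟨g, hg⟩ := hne
          have := M.rk_mono (Finset.singleton_subset_iff.2 hg)
          rw [hrk1] at this; omega
        have h3 := hnosep F hFnonempty hFne
        rw [hF2, hr3, ← hGdef] at h3
        omega
      have hGind : M.Indep G := M.indep_of_rk_eq_card (by rw [hGrk, hGcard])
      -- no 4-element set of rank ≤ 2
      have h4elt : ∀ W : Finset (Fin n), W.card = 4 → M.rk W ≤ 2 → False := by
        intro W hWc hWr
        have hWne : W ≠ univ := by
          intro h; rw [h, hcard5] at hWc; omega
        have hW0 : W ≠ ∅ := by
          intro h; rw [h] at hWc; simp at hWc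
        have hWc1 : (univ \ W).card = 1 := by
          rw [Finset.card_sdiff_of_subset (subset_univ W), hcard5, hWc]
        obtain ⟨e, he⟩ := Finset.card_eq_one.1 hWc1
        have hrkc : M.rk (univ \ W) = 1 := by rw [he, hrk1]
        have hins : insert e W = univ := by
          ext z
          simp only [Finset.mem_insert, mem_univ, iff_true]
          by_cases hz : z ∈ W
          · right; exact hz
          · left
            have : z ∈ univ \ W := Finset.mem_sdiff.2 ⟨mem_univ z, hz⟩
            rw [he] at this; simpa using this
        have ha1 := M.rk_insert_le e W
        rw [hins, hr3] at ha1
        exact hnosep W hW0 hWne (by omega)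
      -- the closure F' of G
      set F' := univ.filter (fun x => M.rk (insert x G) ≤ 2) with hF'def
      have hmemF' : ∀ z : Fin n, z ∈ F' ↔ M.rk (insert z G) ≤ 2 := by
        intro z; simp [hF'def]
      have hGF' : G ⊆ F' := by
        intro z hz
        rw [hmemF', Finset.insert_eq_self.2 hz, hGrk]
      have hF'line : ∀ x ∈ F', M.rk (insert x G) = 2 := by
        intro x hx
        have ha1 := (hmemF' x).1 hx
        have ha2 := M.rk_mono (Finset.subset_insert x G)
        rw [hGrk] at ha2
        omega
      have hout : ∀ x : Fin n, x ∉ F' → M.rk (insert x G) = 3 := by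
        intro x hx
        have ha1 : ¬ M.rk (insert x G) ≤ 2 := fun h => hx ((hmemF' x).2 h)
        have ha2 : M.rk (insert x G) ≤ 3 := by
          have := M.rk_mono (subset_univ (insert x G)); omega
        omega
      have hF'G1 : (F' \ G).card ≤ 1 := by
        by_contra hc
        obtain ⟨f, hf, f', hf', hff'⟩ := Finset.one_lt_card.1
          (show 1 < (F' \ G).card by omega)
        have hfF' := (Finset.mem_sdiff.1 hf).1
        have hfG := (Finset.mem_sdiff.1 hf).2
        have hf'F' := (Finset.mem_sdiff.1 hf').1
        have hf'G := (Finset.mem_sdiff.1 hf').2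
        have hrk2 : M.rk (insert f' (insert f G)) = 2 := by
          have e1 : M.rk (insert f G) = 2 := hF'line f hfF'
          have e2 : M.rk (insert f' G) = M.rk G := by rw [hF'line f' hf'F', hGrk]
          have e3 := M.rk_insert_eq_of_subset f' (Finset.subset_insert f G) e2
          rw [e3, e1]
        have hc4 : (insert f' (insert f G)).card = 4 := by
          rw [Finset.card_insert_of_notMem, Finset.card_insert_of_notMem hfG, hGcard]
          simp only [Finset.mem_insert]
          push_neg
          exact ⟨hff'.symm, hf'G⟩
        exact h4elt _ hc4 (le_of_eq hrk2)
      have hF'rk : M.rk F' = 2 := by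
        have hu := M.rk_union_eq G F' (fun x hx => by rw [hF'line x hx, hGrk])
        rw [Finset.union_eq_right.2 hGF'] at hu
        rw [hu, hGrk]
      have houtF' : ∀ x : Fin n, x ∉ F' → M.rk (insert x F') = 3 := by
        intro x hx
        have ha1 : M.rk (insert x G) ≤ M.rk (insert x F') :=
          M.rk_mono (Finset.insert_subset_insert x hGF')
        have ha2 : M.rk (insert x F') ≤ 3 := by
          have := M.rk_mono (subset_univ (insert x F')); omega
        rw [hout x hx] at ha1
        omega
      -- parallel contradictions
      have hparG : ∀ s x : Fin n, s ∈ G → x ≠ s → M.rk {x, s} ≤ 1 → False := by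
        intro s x hs hxs hrk
        by_cases hxG : x ∈ G
        · have hsub : ({x, s} : Finset (Fin n)) ⊆ G := by
            intro z hz
            simp only [Finset.mem_insert, mem_singleton] at hz
            rcases hz with rfl | rfl
            exacts [hxG, hs]
          have := M.rk_of_indep (M.indep_subset hGind hsub)
          rw [card_pair hxs] at this
          omega
        · have hxF : x ∈ F := hFmem2 x hxG
          have hstep : M.rk (insert s {x}) = M.rk {x} := by
            have h1 : M.rk {s, x} ≤ 1 := by rw [← hrk_pair_comm]; exact hrk
            have h2 := hrk_pair_ge s x
            show M.rk {s, x} = M.rk {x}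
            rw [hrk1]; omega
          have hfin := M.rk_insert_eq_of_subset s (Finset.singleton_subset_iff.2 hxF) hstep
          rw [hFins s (hsGnotF s hs), hF2] at hfin
          omega
      have hparF' : ∀ x e : Fin n, x ∈ F' → e ∉ F' → M.rk {e, x} ≤ 1 → False := by
        intro x e hx he hrk
        have hstep : M.rk (insert e {x}) = M.rk {x} := by
          have h2 := hrk_pair_ge e x
          show M.rk {e, x} = M.rk {x}
          rw [hrk1]; omega
        have hfin := M.rk_insert_eq_of_subset e (Finset.singleton_subset_iff.2 hx) hstep
        rw [houtF' e he, hF'rk] at hfin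
        omega
      -- the truncated matroid N
      set NInd : Finset (Fin n) → Prop :=
        fun I => M.Indep I ∧ I.card ≤ 2 ∧ (I.card ≤ 1 ∨ ¬ I ⊆ F') with hNInd
      have hNsub : ∀ ⦃I J : Finset (Fin n)⦄, NInd J → I ⊆ J → NInd I := by
        intro I J hJ hIJ
        obtain ⟨hJi, hJc, hJ3⟩ := hJ
        refine ⟨M.indep_subset hJi hIJ, le_trans (Finset.card_le_card hIJ) hJc, ?_⟩
        rcases Nat.lt_or_ge I.card 2 with h | h
        · exact Or.inl (by omega)
        · have hcc := Finset.card_le_card hIJ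
          have heq : I = J := Finset.eq_of_subset_of_card_le hIJ (by omega)
          rw [heq]; exact hJ3
      have hNaug : ∀ ⦃I J : Finset (Fin n)⦄, NInd I → NInd J → I.card < J.card →
          ∃ e ∈ J, e ∉ I ∧ NInd (insert e I) := by
        intro I J hI hJ hlt
        obtain ⟨hIi, hIc, hI3⟩ := hI
        obtain ⟨hJi, hJc, hJ3⟩ := hJ
        rcases Nat.lt_or_ge J.card 2 with hJ2 | hJ2
        · have hIe : I = ∅ := Finset.card_eq_zero.1 (by omega)
          obtain ⟨e, he⟩ := Finset.card_eq_one.1 (show J.card = 1 by omega)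
          subst hIe
          refine ⟨e, by rw [he]; exact mem_singleton_self e, by simp, ?_, by simp, Or.inl (by simp)⟩
          show M.Indep (insert e ∅)
          have heq : insert e (∅ : Finset (Fin n)) = {e} := rfl
          rw [heq]; exact hloopless e
        · have hJc2 : J.card = 2 := le_antisymm hJc hJ2
          have hJF' : ¬ J ⊆ F' := by
            rcases hJ3 with h | h
            · omega
            · exact h
          obtain ⟨x1, x2, hx12, hJeq⟩ := Finset.card_eq_two.1 hJc2
          rcases Nat.lt_or_ge I.card 1 with hI0 | hI1
          · have hIe : I = ∅ := Finset.card_eq_zero.1 (by omega)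
            subst hIe
            refine ⟨x1, by rw [hJeq]; exact mem_insert_self _ _, by simp, ?_, by simp,
              Or.inl (by simp)⟩
            show M.Indep (insert x1 ∅)
            have heq : insert x1 (∅ : Finset (Fin n)) = {x1} := rfl
            rw [heq]; exact hloopless x1
          · have hIc1 : I.card = 1 := le_antisymm (by omega) hI1
            obtain ⟨x, rfl⟩ := Finset.card_eq_one.1 hIc1
            by_cases hxJ : x ∈ J
            · have hex : ∃ e ∈ J, e ≠ x := by
                by_contra hcon; push_neg at hcon
                have hsub : J ⊆ {x} := fun z hz => mem_singleton.2 (hcon z hz)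
                have := Finset.card_le_card hsub
                rw [card_singleton] at this
                omega
              obtain ⟨e, heJ, hex2⟩ := hex
              refine ⟨e, heJ, by simp [hex2], ?_⟩
              have heq : insert e ({x} : Finset (Fin n)) = J := by
                refine Finset.eq_of_subset_of_card_le ?_ ?_
                · intro z hz
                  simp only [Finset.mem_insert, mem_singleton] at hz
                  rcases hz with rfl | rfl
                  exacts [heJ, hxJ]
                · rw [Finset.card_insert_of_notMem (by simp [hex2]), card_singleton, hJc2]
              rw [heq]
              exact ⟨hJi, hJc, hJ3⟩
            · by_cases hxF : x ∈ F'
              · have hex : ∃ e ∈ J, e ∉ F' := by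
                  by_contra hcon; push_neg at hcon; exact hJF' hcon
                obtain ⟨e, heJ, heF⟩ := hex
                have hexne : e ≠ x := fun h => heF (h ▸ hxF)
                refine ⟨e, heJ, by simp [hexne], ?_, ?_, Or.inr ?_⟩
                · by_contra hdep
                  exact hparF' x e hxF heF (hdep_rk e x hexne hdep)
                · rw [Finset.card_insert_of_notMem (by simp [hexne]), card_singleton]
                · intro hsub
                  exact heF (hsub (mem_insert_self e {x}))
              · have hex : ∃ e ∈ J, M.Indep (insert e {x}) := by
                  by_contra hcon; push_neg at hcon
                  have hm1 : x1 ∈ J := by rw [hJeq]; exact mem_insert_self _ _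
                  have hm2 : x2 ∈ J := by
                    rw [hJeq]; exact mem_insert_of_mem (mem_singleton_self _)
                  have hne1 : x1 ≠ x := fun h => hxJ (h ▸ hm1)
                  have hne2 : x2 ≠ x := fun h => hxJ (h ▸ hm2)
                  have h1 : M.rk {x1, x} ≤ 1 := hdep_rk x1 x hne1 (hcon x1 hm1)
                  have h2 : M.rk {x2, x} ≤ 1 := hdep_rk x2 x hne2 (hcon x2 hm2)
                  have h3 : M.rk {x1, x2} ≤ 1 := htrans x x1 x2
                    (by rw [hrk_pair_comm]; exact h1) (by rw [hrk_pair_comm]; exact h2)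
                  have h4 : M.rk J = 2 := by rw [M.rk_of_indep hJi, hJc2]
                  rw [hJeq] at h4
                  omega
                obtain ⟨e, heJ, hei⟩ := hex
                have hexne : e ≠ x := fun h => hxJ (h ▸ heJ)
                refine ⟨e, heJ, by simp [hexne], hei, ?_, Or.inr ?_⟩
                · rw [Finset.card_insert_of_notMem (by simp [hexne]), card_singleton]
                · intro hsub
                  exact hxF (hsub (Finset.mem_insert_of_mem (mem_singleton_self x)))
      -- a rank-3 witness
      obtain ⟨B3, hB3i, -, hB3c⟩ := M.exists_basis univ
      rw [hr3] at hB3c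
      refine finish ⟨univ, NInd, ⟨M.indep_empty, by simp, Or.inl (by simp)⟩, hNsub, hNaug,
        fun I _ => subset_univ I⟩ (FinMatroid.unifOn G 1) ⟨?_, ?_⟩ ?_ ?_
      · rw [hE]
        show (univ : Finset (Fin n)) = univ ∪ G
        rw [Finset.union_eq_left.2 (subset_univ G)]
      · intro I
        show M.Indep I ↔ ∃ I1 I2 : Finset (Fin n), NInd I1 ∧ (I2 ⊆ G ∧ I2.card ≤ 1) ∧
          I = I1 ∪ I2
        constructor
        · intro hI
          have hIc3 : I.card ≤ 3 := by
            have h1 := M.card_le_rk hI (subset_univ _); omega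
          have hmk : ∀ s : Fin n, s ∈ I → s ∈ G → NInd (I.erase s) →
              ∃ I1 I2 : Finset (Fin n), NInd I1 ∧ (I2 ⊆ G ∧ I2.card ≤ 1) ∧ I = I1 ∪ I2 := by
            intro s hsI hsG hN1
            refine ⟨I.erase s, {s}, hN1, ⟨Finset.singleton_subset_iff.2 hsG, by simp⟩, ?_⟩
            ext z
            simp only [Finset.mem_union, Finset.mem_erase, mem_singleton]
            constructor
            · intro hz
              by_cases hzs : z = s
              · exact Or.inr hzs
              · exact Or.inl ⟨hzs, hz⟩
            · rintro (⟨-, hz⟩ | rfl)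
              exacts [hz, hsI]
          by_cases hIN : I.card ≤ 2 ∧ (I.card ≤ 1 ∨ ¬ I ⊆ F')
          · exact ⟨I, ∅, ⟨hI, hIN.1, hIN.2⟩, ⟨by simp, by simp⟩, (Finset.union_empty I).symm⟩
          · push_neg at hIN
            by_cases h3 : I.card = 3
            · have hInG : (I ∩ G).Nonempty := by
                rw [Finset.nonempty_iff_ne_empty]
                intro hem
                have hIF : I ⊆ F := by
                  intro z hz
                  by_cases hzG : z ∈ G
                  · exact absurd (Finset.mem_inter.2 ⟨hz, hzG⟩) (by rw [hem]; simp)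
                  · exact hFmem2 z hzG
                have heq : I = F := Finset.eq_of_subset_of_card_le hIF (by omega)
                have h2 := M.rk_of_indep hI
                rw [heq, hF2, hFcard] at h2
                omega
              by_cases hGI : G ⊆ I
              · have hwc : (I \ G).card = 1 := by
                  rw [Finset.card_sdiff_of_subset hGI, h3, hGcard]
                obtain ⟨w, hw⟩ := Finset.card_eq_one.1 hwc
                have hwm : w ∈ I ∧ w ∉ G := by
                  have hh : w ∈ I \ G := by rw [hw]; exact mem_singleton_self w
                  exact ⟨(Finset.mem_sdiff.1 hh).1, (Finset.mem_sdiff.1 hh).2⟩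
                have hwF' : w ∉ F' := by
                  intro hwF'
                  have hIF' : I ⊆ F' := by
                    intro z hz
                    by_cases hzG : z ∈ G
                    · exact hGF' hzG
                    · have hh : z ∈ I \ G := Finset.mem_sdiff.2 ⟨hz, hzG⟩
                      rw [hw, mem_singleton] at hh
                      rw [hh]; exact hwF'
                  have h2 := M.rk_mono hIF'
                  have h4 := M.rk_of_indep hI
                  rw [hF'rk] at h2
                  omega
                obtain ⟨g0, hg0⟩ := Finset.nonempty_iff_ne_empty.2 hGne
                have hg0I : g0 ∈ I := hGI hg0
                have hwg0 : w ≠ g0 := fun h => hwm.2 (h ▸ hg0)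
                refine hmk g0 hg0I hg0 ⟨M.indep_subset hI (Finset.erase_subset _ _), ?_, Or.inr ?_⟩
                · rw [Finset.card_erase_of_mem hg0I, h3]
                · intro hsub
                  exact hwF' (hsub (Finset.mem_erase.2 ⟨hwg0, hwm.1⟩))
              · have hcard1 : (I ∩ G).card = 1 := by
                  have hle : I ∩ G ⊆ G := Finset.inter_subset_right
                  have hne : I ∩ G ≠ G := by
                    intro h
                    refine hGI (fun z hz => ?_)
                    have hzi : z ∈ I ∩ G := by rw [h]; exact hz
                    exact (Finset.mem_inter.1 hzi).1
                  have h1 := Finset.card_lt_card (ssubset_of_subset_of_ne hle hne)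
                  have h2 := Finset.card_pos.2 hInG
                  omega
                obtain ⟨s, hseq⟩ := Finset.card_eq_one.1 hcard1
                have hsmem : s ∈ I ∧ s ∈ G := by
                  have hh : s ∈ I ∩ G := by rw [hseq]; exact mem_singleton_self s
                  exact ⟨(Finset.mem_inter.1 hh).1, (Finset.mem_inter.1 hh).2⟩
                refine hmk s hsmem.1 hsmem.2 ⟨M.indep_subset hI (Finset.erase_subset _ _), ?_,
                  Or.inr ?_⟩
                · rw [Finset.card_erase_of_mem hsmem.1, h3]
                · intro hsub
                  have hsubFG : I.erase s ⊆ F' \ G := by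
                    intro z hz
                    refine Finset.mem_sdiff.2 ⟨hsub hz, fun hzG => ?_⟩
                    have hzi : z ∈ I ∩ G :=
                      Finset.mem_inter.2 ⟨Finset.mem_of_mem_erase hz, hzG⟩
                    rw [hseq, mem_singleton] at hzi
                    exact (Finset.mem_erase.1 hz).1 hzi
                  have h1 := Finset.card_le_card hsubFG
                  rw [Finset.card_erase_of_mem hsmem.1, h3] at h1
                  omega
            · have hc2 : I.card ≤ 2 := by omega
              obtain ⟨h1lt, hIF'⟩ := hIN hc2
              have hInG : (I ∩ G).Nonempty := by
                rw [Finset.nonempty_iff_ne_empty]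
                intro hem
                have hsubFG : I ⊆ F' \ G := by
                  intro z hz
                  refine Finset.mem_sdiff.2 ⟨hIF' hz, fun hzG => ?_⟩
                  exact absurd (Finset.mem_inter.2 ⟨hz, hzG⟩) (by rw [hem]; simp)
                have h1 := Finset.card_le_card hsubFG
                omega
              obtain ⟨s, hs⟩ := hInG
              have hsI := (Finset.mem_inter.1 hs).1
              have hsG := (Finset.mem_inter.1 hs).2
              refine hmk s hsI hsG ⟨M.indep_subset hI (Finset.erase_subset _ _), ?_, Or.inl ?_⟩
              · rw [Finset.card_erase_of_mem hsI]; omega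
              · rw [Finset.card_erase_of_mem hsI]; omega
        · rintro ⟨I1, I2, hI1, hI2, rfl⟩
          obtain ⟨h1i, h1c, h13⟩ := hI1
          obtain ⟨h2G, h2c⟩ := hI2
          haveI : Nonempty (Fin n) := ⟨a⟩
          rcases Finset.card_le_one_iff_subset_singleton.1 h2c with ⟨s, hsub2⟩
          rcases Finset.subset_singleton_iff.1 hsub2 with rfl | rfl
          · rw [Finset.union_empty]; exact h1i
          · have hsG2 : s ∈ G := h2G (mem_singleton_self s)
            by_cases hsI1 : s ∈ I1
            · have heq : I1 ∪ {s} = I1 :=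
                Finset.union_eq_left.2 (Finset.singleton_subset_iff.2 hsI1)
              rw [heq]; exact h1i
            · have huis : I1 ∪ {s} = insert s I1 := by
                rw [Finset.union_comm]; rfl
              rw [huis]
              rcases Nat.lt_or_ge I1.card 2 with hc1 | hc2
              · rcases Nat.lt_or_ge I1.card 1 with hc0 | hc1'
                · have heq : I1 = ∅ := Finset.card_eq_zero.1 (by omega)
                  rw [heq]
                  show M.Indep (insert s ∅)
                  have heq2 : insert s (∅ : Finset (Fin n)) = {s} := rfl
                  rw [heq2]; exact hloopless s
                · obtain ⟨x, rfl⟩ := Finset.card_eq_one.1 (le_antisymm (by omega) hc1')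
                  by_contra hdep
                  have hxs : s ≠ x := fun h => hsI1 (by rw [h]; exact mem_singleton_self x)
                  exact hparG s x hsG2 (fun h => hxs h.symm)
                    (by rw [hrk_pair_comm]; exact hdep_rk s x hxs hdep)
              · have h1c2 : I1.card = 2 := le_antisymm h1c hc2
                have h1F' : ¬ I1 ⊆ F' := by
                  rcases h13 with h | h
                  · omega
                  · exact h
                by_contra hdep
                have hrkI1 : M.rk I1 = 2 := by rw [M.rk_of_indep h1i, h1c2]
                have hT'rk : M.rk (insert s I1) = 2 := by
                  have hub := M.rk_le_card (insert s I1)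
                  have hcc : (insert s I1).card = 3 := by
                    rw [Finset.card_insert_of_notMem hsI1, h1c2]
                  have hne3 : M.rk (insert s I1) ≠ 3 := fun h =>
                    hdep (M.indep_of_rk_eq_card (by rw [h, hcc]))
                  have hlb := M.rk_mono (Finset.subset_insert s I1)
                  omega
                obtain ⟨x1, x2, hx12, h1eq⟩ := Finset.card_eq_two.1 h1c2
                by_cases hcase : x1 ∈ F' ∨ x2 ∈ F'
                · have hvu : ∃ u v : Fin n, u ≠ v ∧ I1 = {u, v} ∧ v ∈ F' ∧ u ∉ F' := by
                    rcases hcase with h | h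
                    · have hx2F : x2 ∉ F' := by
                        intro hx2F
                        refine h1F' ?_
                        rw [h1eq]
                        intro z hz
                        simp only [Finset.mem_insert, mem_singleton] at hz
                        rcases hz with rfl | rfl
                        exacts [h, hx2F]
                      exact ⟨x2, x1, hx12.symm, by rw [h1eq, Finset.pair_comm], h, hx2F⟩
                    · have hx1F : x1 ∉ F' := by
                        intro hx1F
                        refine h1F' ?_
                        rw [h1eq]
                        intro z hz
                        simp only [Finset.mem_insert, mem_singleton] at hz
                        rcases hz with rfl | rfl
                        exacts [hx1F, h]
                      exact ⟨x1, x2, hx12, h1eq, h, hx1F⟩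
                  obtain ⟨u, v, huv, h1eq2, hvF, huF⟩ := hvu
                  have hvI1 : v ∈ I1 := by
                    rw [h1eq2]; exact mem_insert_of_mem (mem_singleton_self v)
                  have hvs_ne : v ≠ s := fun h => hsI1 (h ▸ hvI1)
                  have hvs : M.rk {v, s} = 2 := by
                    by_contra hdep2
                    have hle1 : M.rk {v, s} ≤ 1 := by
                      have h1 := M.rk_le_card ({v, s} : Finset (Fin n))
                      rw [card_pair hvs_ne] at h1
                      omega
                    exact hparG s v hsG2 hvs_ne hle1
                  have hvsF' : ({v, s} : Finset (Fin n)) ⊆ F' := by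
                    intro z hz
                    simp only [Finset.mem_insert, mem_singleton] at hz
                    rcases hz with rfl | rfl
                    exacts [hvF, hGF' hsG2]
                  have hsetenq : insert u ({v, s} : Finset (Fin n)) = insert s I1 := by
                    rw [h1eq2, Finset.insert_comm s u {v}, Finset.pair_comm s v]
                  have hstep : M.rk (insert u {v, s}) = M.rk {v, s} := by
                    rw [hsetenq, hT'rk, hvs]
                  have hfin := M.rk_insert_eq_of_subset u hvsF' hstep
                  rw [houtF' u huF, hF'rk] at hfin
                  omega
                · push_neg at hcase
                  have h1F : I1 ⊆ F := by
                    rw [h1eq]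
                    intro z hz
                    simp only [Finset.mem_insert, mem_singleton] at hz
                    rcases hz with rfl | rfl
                    · exact hFmem2 z (fun hzG => hcase.1 (hGF' hzG))
                    · exact hFmem2 z (fun hzG => hcase.2 (hGF' hzG))
                  have hstep : M.rk (insert s I1) = M.rk I1 := by rw [hT'rk, hrkI1]
                  have hfin := M.rk_insert_eq_of_subset s h1F hstep
                  rw [hFins s (hsGnotF s hsG2), hF2] at hfin
                  omega
      · refine neqI _ B3 hB3i ?_
        intro hB
        obtain ⟨-, hc, -⟩ := hB
        omega
      · refine neqE _ ?_
        show G ≠ univ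
        intro h
        rw [h, hcard5] at hGcard
        omega
    · push_neg at hline
      have hchar : ∀ I : Finset (Fin n), M.Indep I ↔ I.card ≤ M.rk univ := by
        intro I
        constructor
        · intro hI
          have := M.card_le_rk hI (subset_univ _); omega
        · intro hc
          obtain ⟨J, hIJ, hJu, hJc⟩ := Finset.exists_subsuperset_card_eq (subset_univ I)
            (show I.card ≤ 3 by omega) (by rw [hcardu]; omega)
          have hJr : M.rk J = 3 := by
            have h1 := hline J hJc
            have h2 := M.rk_le_card J
            omega
          exact M.indep_subset (M.indep_of_rk_eq_card (by rw [hJr, hJc])) hIJ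
      exact unifsplit 1 2 (by omega) (by omega) (by omega) (by omega) hchar
  -- ======== wrap up ========
  intro I
  constructor
  · intro hI
    by_cases h0 : I = ∅
    · exact Or.inl h0
    · right
      obtain ⟨i, hi⟩ := Finset.nonempty_iff_ne_empty.2 h0
      refine ⟨i, ?_⟩
      by_contra hne
      have hex : ∃ j ∈ I, j ≠ i := by
        by_contra hc; push_neg at hc
        exact hne (Finset.eq_singleton_iff_unique_mem.2 ⟨hi, fun j hj => hc j hj⟩)
      obtain ⟨j, hj, hji⟩ := hex
      refine key j i hji (M.indep_subset hI ?_)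
      intro z hz
      simp only [mem_insert, mem_singleton] at hz
      rcases hz with rfl | rfl
      · exact hj
      · exact hi
  · rintro (rfl | ⟨i, rfl⟩)
    · exact M.indep_empty
    · exact hloopless i
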